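/- Segment-counting lemma for R-NN: if x ≤ Σ_{i=1}^{k} 2^{r_i + 1}·i·θ with θ = x/√n, each r_i ≥ 1, and k ≤ log₂ n, then r_max ≥ (1/2)log₂ n − 2 log₂ log₂ n − 2, hence Σ_{i=1}^k r_i = Ω(log n). -/

import Mathlib

/-- Segment-counting lemma for R-NN: if `x ≤ ∑_{i=1}^{k} 2^{r_i+1}·i·θ` with
`θ = x/√n`, each `r_i ≥ 1` and `k ≤ log₂ n`, then
`r_max ≥ (1/2)·log₂ n − 2·log₂ log₂ n − 2`. -/
theorem segment_counting (n : ℕ) (hn : 2 ≤ n) (x θ : ℝ) (hx : 0 < x)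
    (hθ : θ = x / Real.sqrt n)
    (k : ℕ) (hk1 : 1 ≤ k) (hk2 : (k : ℝ) ≤ Real.logb 2 n)
    (r : ℕ → ℕ) (hr : ∀ i ∈ Finset.Icc 1 k, 1 ≤ r i)
    (hsum : x ≤ ∑ i ∈ Finset.Icc 1 k, (2:ℝ)^(r i + 1) * (i:ℝ) * θ) :
    (((Finset.Icc 1 k).sup r : ℕ) : ℝ)
      ≥ (1/2) * Real.logb 2 n - 2 * Real.logb 2 (Real.logb 2 n) - 2 := by
  set R := (Finset.Icc 1 k).sup r with hR
  have hnpos : (0:ℝ) < n := by positivity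
  have hsq : (0:ℝ) < Real.sqrt n := Real.sqrt_pos.mpr hnpos
  have hθpos : 0 < θ := by rw [hθ]; positivity
  -- bound each term
  have hterm : ∀ i ∈ Finset.Icc 1 k, (2:ℝ)^(r i + 1) * (i:ℝ) * θ
      ≤ (2:ℝ)^(R + 1) * (k:ℝ) * θ := by
    intro i hi
    have hiR : r i ≤ R := Finset.le_sup hi
    have hik : i ≤ k := (Finset.mem_Icc.mp hi).2
    have h1 : (2:ℝ)^(r i + 1) ≤ (2:ℝ)^(R + 1) :=
      pow_le_pow_right₀ (by norm_num) (by omega)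
    have h2 : (i:ℝ) ≤ (k:ℝ) := by exact_mod_cast hik
    have : (2:ℝ)^(r i + 1) * (i:ℝ) ≤ (2:ℝ)^(R + 1) * (k:ℝ) := by
      apply mul_le_mul h1 h2 (by positivity) (by positivity)
    exact mul_le_mul_of_nonneg_right this hθpos.le
  have hsum2 : x ≤ (k:ℝ) * ((2:ℝ)^(R + 1) * (k:ℝ) * θ) := by
    calc x ≤ ∑ i ∈ Finset.Icc 1 k, (2:ℝ)^(r i + 1) * (i:ℝ) * θ := hsum
    _ ≤ ∑ _i ∈ Finset.Icc 1 k, (2:ℝ)^(R + 1) * (k:ℝ) * θ :=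
        Finset.sum_le_sum hterm
    _ = (k:ℝ) * ((2:ℝ)^(R + 1) * (k:ℝ) * θ) := by
        rw [Finset.sum_const, Nat.card_Icc]; simp [nsmul_eq_mul]
  -- derive sqrt n ≤ 2^(R+1) * k^2
  have hC : Real.sqrt n ≤ (2:ℝ)^(R + 1) * (k:ℝ)^2 := by
    have h3 : x * Real.sqrt n ≤ (2:ℝ)^(R + 1) * (k:ℝ)^2 * x := by
      have := mul_le_mul_of_nonneg_right hsum2 hsq.le
      rw [hθ] at this
      calc x * Real.sqrt n ≤ (k:ℝ) * ((2:ℝ)^(R + 1) * (k:ℝ) * (x / Real.sqrt n)) * Real.sqrt n := this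
      _ = (2:ℝ)^(R + 1) * (k:ℝ)^2 * x := by
          field_simp
    have := (mul_le_mul_iff_of_pos_right hx).mp (by linarith [h3] : Real.sqrt n * x ≤ (2:ℝ)^(R + 1) * (k:ℝ)^2 * x)
    exact this
  -- take logs
  have hkpos : (0:ℝ) < (k:ℝ) := by exact_mod_cast hk1
  have hlog : Real.logb 2 (Real.sqrt n) ≤ Real.logb 2 ((2:ℝ)^(R + 1) * (k:ℝ)^2) :=
    Real.logb_le_logb_of_le one_lt_two (by positivity) hC
  have hsqrtlog : Real.logb 2 (Real.sqrt n) = (1/2) * Real.logb 2 n := by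
    rw [Real.logb, Real.logb, Real.log_sqrt hnpos.le]; ring
  have hrhs : Real.logb 2 ((2:ℝ)^(R + 1) * (k:ℝ)^2)
      = (R + 1 : ℝ) + 2 * Real.logb 2 (k:ℝ) := by
    rw [Real.logb_mul (by positivity) (by positivity), Real.logb_pow, Real.logb_pow,
      Real.logb_self_eq_one (by norm_num : (1:ℝ) < 2)]
    push_cast
    ring
  have hklog : Real.logb 2 (k:ℝ) ≤ Real.logb 2 (Real.logb 2 n) :=
    Real.logb_le_logb_of_le one_lt_two hkpos hk2
  rw [hsqrtlog, hrhs] at hlog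
  have : ((R:ℕ):ℝ) = (R:ℝ) := rfl
  push_cast
  linarith
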